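/- Finite-depth proportional bound (induction invariant from the proof of Proposition 1). Let m be a discrete semimeasure, M z := ∑' u : List Bool, m (z ++ u), and let a : List Bool → ℝ≥0∞ satisfy, for every string z and bit b, a (z ++ [b]) = a z * (M (z ++ [b]) / (M (z ++ [false]) + M (z ++ [true]))) (quotients in ℝ≥0∞, 0/0 = 0). Then for every string z with a z ≠ 0 and a z ≠ ∞ and every infinite binary sequence ω : ℕ → Bool, the sum along the path starting at z satisfies ∑' n : ℕ, m (z ++ ω↾n) / a (z ++ ω↾n) ≤ M z / a z. -/

import Mathlib

open scoped ENNReal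

/-- The first `n` bits of an infinite binary sequence `ω`. -/
def prefixSeq (ω : ℕ → Bool) (n : ℕ) : List Bool := (List.range n).map ω

/-- A discrete semimeasure on binary strings. -/
def DiscreteSemimeasure (m : List Bool → ℝ≥0∞) : Prop := ∑' x : List Bool, m x ≤ 1

lemma tsum_list_split (f : List Bool → ℝ≥0∞) :
    ∑' u : List Bool, f u
      = f [] + ((∑' t : List Bool, f (false :: t)) + ∑' t : List Bool, f (true :: t)) := by
  rw [ENNReal.tsum_eq_add_tsum_ite ([] : List Bool)]
  congr 1
  have h2 : ((∑' t : List Bool, f (false :: t)) + ∑' t : List Bool, f (true :: t))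
      = ∑' p : Bool × List Bool, f (p.1 :: p.2) := by
    rw [ENNReal.tsum_prod', tsum_bool]
  rw [h2]
  apply tsum_eq_tsum_of_ne_zero_bij (fun x => x.1.1 :: x.1.2)
  · rintro ⟨⟨b, t⟩, _⟩ ⟨⟨b', t'⟩, _⟩ h
    simp_all
  · rintro u hu
    rcases u with _ | ⟨b, t⟩
    · simp at hu
    · refine ⟨⟨(b, t), ?_⟩, rfl⟩
      simpa using hu
  · rintro ⟨⟨b, t⟩, _⟩
    simp

/-- Finite-depth proportional bound: the induction invariant in the proof of
Proposition 1. -/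
theorem proportional_invariant (m : List Bool → ℝ≥0∞) (hm : DiscreteSemimeasure m)
    (M : List Bool → ℝ≥0∞) (hM : ∀ z : List Bool, M z = ∑' u : List Bool, m (z ++ u))
    (a : List Bool → ℝ≥0∞)
    (ha : ∀ (z : List Bool) (b : Bool),
      a (z ++ [b]) = a z * (M (z ++ [b]) / (M (z ++ [false]) + M (z ++ [true])))) :
    ∀ z : List Bool, a z ≠ 0 → a z ≠ ∞ →
      ∀ ω : ℕ → Bool,
        ∑' n : ℕ, m (z ++ prefixSeq ω n) / a (z ++ prefixSeq ω n) ≤ M z / a z := by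
  -- basic facts about M
  have Mfin : ∀ z : List Bool, M z ≠ ∞ := by
    intro z
    have h1 : M z ≤ 1 := by
      rw [hM]
      exact le_trans (ENNReal.tsum_comp_le_tsum_of_injective
        (List.append_right_injective z) m) hm
    exact ne_top_of_le_ne_top ENNReal.one_ne_top h1
  have Msplit : ∀ z : List Bool,
      M z = m z + (M (z ++ [false]) + M (z ++ [true])) := by
    intro z
    rw [hM z]
    rw [tsum_list_split (fun u => m (z ++ u))]
    simp only [List.append_nil]
    congr 1
    congr 1 <;> rw [hM] <;> exact tsum_congr (fun t => by rw [List.append_assoc]; rfl)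
  have m_le_M : ∀ z : List Bool, m z ≤ M z := by
    intro z
    rw [hM z]
    have := ENNReal.le_tsum (f := fun u => m (z ++ u)) ([] : List Bool)
    simpa using this
  have Mzero : ∀ z : List Bool, M z = 0 → ∀ u : List Bool, m (z ++ u) = 0 := by
    intro z hz u
    have := ENNReal.le_tsum (f := fun u => m (z ++ u)) u
    rw [← hM z, hz] at this
    exact le_antisymm this zero_le
  -- prefix recursion
  have hpre : ∀ (ω : ℕ → Bool) (n : ℕ),
      prefixSeq ω (n + 1) = ω 0 :: prefixSeq (fun k => ω (k + 1)) n := by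
    intro ω n
    simp [prefixSeq, List.range_succ_eq_map, List.map_map, Function.comp]
  -- main finite induction
  have key : ∀ (N : ℕ) (z : List Bool), a z ≠ 0 → a z ≠ ∞ → ∀ ω : ℕ → Bool,
      ∑ n ∈ Finset.range N, m (z ++ prefixSeq ω n) / a (z ++ prefixSeq ω n)
        ≤ M z / a z := by
    intro N
    induction N with
    | zero => simp
    | succ N ih =>
      intro z h0 h' ω
      rw [Finset.sum_range_succ']
      set b := ω 0 with hb
      set ω' : ℕ → Bool := fun k => ω (k + 1) with hω'
      have hrw : ∀ n, z ++ prefixSeq ω (n + 1) = (z ++ [b]) ++ prefixSeq ω' n := by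
        intro n
        rw [hpre ω n, List.append_assoc]
        rfl
      have h00 : z ++ prefixSeq ω 0 = z := by simp [prefixSeq]
      simp only [hrw, h00]
      set s := M (z ++ [false]) + M (z ++ [true]) with hs
      by_cases hMb : M (z ++ [b]) = 0
      · -- all shifted terms vanish
        have hterm : ∀ n, m ((z ++ [b]) ++ prefixSeq ω' n) / a ((z ++ [b]) ++ prefixSeq ω' n) = 0 := by
          intro n
          rw [Mzero (z ++ [b]) hMb (prefixSeq ω' n), ENNReal.zero_div]
        simp only [hterm, Finset.sum_const_zero, zero_add]
        exact ENNReal.div_le_div_right (m_le_M z) _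
      · have hMb_le : M (z ++ [b]) ≤ s := by
          rcases hb' : b with _ | _ <;> rw [hs] <;>
            [exact le_self_add; exact le_add_self]
        have hs0 : s ≠ 0 := fun h => hMb (le_antisymm (h ▸ hMb_le) zero_le)
        have hs' : s ≠ ∞ := by
          rw [hs]
          exact ENNReal.add_ne_top.mpr ⟨Mfin _, Mfin _⟩
        have hq' : M (z ++ [b]) / s ≠ ∞ :=
          (ENNReal.div_lt_top (Mfin _) hs0).ne
        have hq0 : M (z ++ [b]) / s ≠ 0 := by
          simp [ENNReal.div_eq_zero_iff, hMb, hs']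
        have hab0 : a (z ++ [b]) ≠ 0 := by
          rw [ha z b, ← hs]
          exact mul_ne_zero h0 hq0
        have hab' : a (z ++ [b]) ≠ ∞ := by
          rw [ha z b, ← hs]
          exact ENNReal.mul_ne_top h' hq'
        have hdiv : M (z ++ [b]) / a (z ++ [b]) = s / a z := by
          symm
          rw [ENNReal.eq_div_iff hab0 hab']
          rw [ha z b, ← hs, div_eq_mul_inv, div_eq_mul_inv]
          calc a z * (M (z ++ [b]) * s⁻¹) * (s * (a z)⁻¹)
              = M (z ++ [b]) * (s⁻¹ * s) * ((a z)⁻¹ * a z) := by ring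
            _ = M (z ++ [b]) := by
                rw [ENNReal.inv_mul_cancel hs0 hs', ENNReal.inv_mul_cancel h0 h',
                  mul_one, mul_one]
        calc (∑ n ∈ Finset.range N,
                m ((z ++ [b]) ++ prefixSeq ω' n) / a ((z ++ [b]) ++ prefixSeq ω' n))
              + m z / a z
            ≤ M (z ++ [b]) / a (z ++ [b]) + m z / a z :=
              add_le_add_left (ih (z ++ [b]) hab0 hab' ω') _
          _ = s / a z + m z / a z := by rw [hdiv]
          _ = (s + m z) / a z := ENNReal.div_add_div_same
          _ = M z / a z := by rw [Msplit z, add_comm s (m z)]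
  intro z h0 h' ω
  exact ENNReal.tsum_le_of_sum_range_le (fun N => key N z h0 h' ω)
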